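/- (General expansion formula.) For 0 \le i, j \le d, F_i E^*_i A E^*_j equals the sum over i \le s \le j of \theta_s \mathcal{L}^{s-i}/\prod_{k=i+1}^{s}(\theta^*_i-\theta^*_k) \cdot \mathcal{L}^{j-s}/\prod_{k=s}^{j-1}(\theta^*_j-\theta^*_k) \, F_jE^*_j, plus the sum over pairs (r,s) with i \le r \le d, 0 \le s \le j, r - s = 1, of \mathcal{L}^{r-i}/\prod_{k=i+1}^{r}(\theta^*_i-\theta^*_k) \cdot \mathcal{R} \cdot \mathcal{L}^{j-s}/\prod_{k=s}^{j-1}(\theta^*_j-\theta^*_k)\, F_jE^*_j. -/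

import Mathlib

/-- General expansion formula for `F_i E*_i A E*_j` in terms of the
split raising/lowering maps `𝓡, 𝓛` (Theorem 8.5 of the paper). -/
theorem stmt10 {F V : Type*} [Field F] [AddCommGroup V] [Module F V]
    [FiniteDimensional F V] (d : ℕ) (hd : 1 ≤ d)
    (A As : Module.End F V) (Es Fi : ℕ → Module.End F V) (θ θs : ℕ → F)
    (cR cL : Module.End F V)
    (hEsEs : ∀ i ≤ d, ∀ j ≤ d, Es i * Es j = if i = j then Es i else 0)
    (hFF : ∀ i ≤ d, ∀ j ≤ d, Fi i * Fi j = if i = j then Fi i else 0)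
    (hEssum : ∑ i ∈ Finset.range (d + 1), Es i = 1)
    (hFsum : ∑ i ∈ Finset.range (d + 1), Fi i = 1)
    (hθsdist : ∀ i ≤ d, ∀ j ≤ d, i ≠ j → θs i ≠ θs j)
    (hFE0 : ∀ i j, i < j → j ≤ d → Fi j * Es i = 0)
    (hEF0 : ∀ i j, i < j → j ≤ d → Es j * Fi i = 0)
    (hFEF : ∀ i ≤ d, Fi i * Es i * Fi i = Fi i)
    (hcR : cR = A - ∑ i ∈ Finset.range (d + 1), θ i • Fi i)
    (hcL : cL = As - ∑ i ∈ Finset.range (d + 1), θs i • Fi i)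
    (hblockA : ∀ i ≤ d, ∀ j ≤ d, i ≠ j → i ≠ j + 1 → Fi i * A * Fi j = 0)
    (hFAF1 : ∀ s < d, Fi (s + 1) * A * Fi s = cR * Fi s)
    (hFAF0 : ∀ s ≤ d, Fi s * A * Fi s = θ s • Fi s)
    (hFE : ∀ i j, i ≤ j → j ≤ d →
      Fi i * Es j =
        (∏ k ∈ Finset.Ico i j, (θs j - θs k))⁻¹ • (cL ^ (j - i) * (Fi j * Es j)))
    (hEF : ∀ i j, i ≤ j → j ≤ d →
      Es i * Fi j =
        (∏ k ∈ Finset.Ioc i j, (θs i - θs k))⁻¹ • (Es i * Fi i * cL ^ (j - i))) :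
    ∀ i ≤ d, ∀ j ≤ d,
      Fi i * Es i * A * Es j =
        (∑ s ∈ Finset.Icc i j,
          (θ s * (∏ k ∈ Finset.Ioc i s, (θs i - θs k))⁻¹ *
            (∏ k ∈ Finset.Ico s j, (θs j - θs k))⁻¹) •
              (cL ^ (s - i) * cL ^ (j - s) * (Fi j * Es j)))
        + ∑ s ∈ (Finset.range (j + 1)).filter (fun s => i ≤ s + 1 ∧ s + 1 ≤ d),
            ((∏ k ∈ Finset.Ioc i (s + 1), (θs i - θs k))⁻¹ *
              (∏ k ∈ Finset.Ico s j, (θs j - θs k))⁻¹) •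
                (cL ^ (s + 1 - i) * cR * cL ^ (j - s) * (Fi j * Es j)) := by
  intro i hi j hj
  -- idempotence
  have hidem : ∀ m ≤ d, Fi m * Fi m = Fi m := by
    intro m hm
    simpa using hFF m hm m hm
  -- nonvanishing of the products of eigenvalue differences
  have hprodIco : ∀ a b : ℕ, b ≤ d → (∏ k ∈ Finset.Ico a b, (θs b - θs k)) ≠ 0 := by
    intro a b hbd
    refine Finset.prod_ne_zero_iff.mpr ?_
    intro k hk
    rw [Finset.mem_Ico] at hk
    exact sub_ne_zero_of_ne (hθsdist b hbd k (by omega) (by omega))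
  -- key absorption lemma L1
  have hL1 : ∀ a m, a ≤ m → m ≤ d →
      Fi a * (cL ^ (m - a) * (Fi m * Es m)) = cL ^ (m - a) * (Fi m * Es m) := by
    intro a m ham hmd
    have hc := hprodIco a m hmd
    have h2 : cL ^ (m - a) * (Fi m * Es m)
        = (∏ k ∈ Finset.Ico a m, (θs m - θs k)) • (Fi a * Es m) := by
      rw [hFE a m ham hmd, smul_smul, mul_inv_cancel₀ hc, one_smul]
    rw [h2, mul_smul_comm, ← mul_assoc, hidem a (le_trans ham hmd)]
  -- L2 : general absorption
  have hL2 : ∀ a m (Z : Module.End F V), a ≤ m → m ≤ d →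
      Fi a * (cL ^ (m - a) * (Fi m * Z)) = cL ^ (m - a) * (Fi m * Z) := by
    intro a m Z ham hmd
    have key : cL ^ (m - a) * (Fi m * Z)
        = (cL ^ (m - a) * (Fi m * Es m)) * (Fi m * Z) := by
      conv_lhs => rw [← hFEF m hmd]
      simp only [mul_assoc]
    rw [key, ← mul_assoc, hL1 a m ham hmd]
  -- L3 : absorption across cR
  have hL3 : ∀ s (Z : Module.End F V), i ≤ s + 1 → s + 1 ≤ d →
      Fi i * (cL ^ (s + 1 - i) * (cR * (Fi s * Z)))
        = cL ^ (s + 1 - i) * (cR * (Fi s * Z)) := by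
    intro s Z h1 h2
    have hsd : s < d := by omega
    have key : cR * (Fi s * Z) = Fi (s + 1) * (A * (Fi s * Z)) := by
      rw [← mul_assoc, ← hFAF1 s hsd]
      simp only [mul_assoc]
    rw [key, hL2 i (s + 1) (A * (Fi s * Z)) h1 h2]
  set g : ℕ → ℕ → Module.End F V :=
    fun r s => Fi i * Es i * Fi r * A * Fi s * Es j with hg
  -- vanishing
  have hg0 : ∀ r ≤ d, ∀ s ≤ d, ¬(i ≤ r ∧ s ≤ j ∧ (r = s ∨ r = s + 1)) → g r s = 0 := by
    intro r hr s hs hcond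
    simp only [hg]
    rcases Nat.lt_or_ge r i with hri | hri
    · have h0 : Es i * Fi r = 0 := hEF0 r i hri hi
      simp only [mul_assoc]
      rw [← mul_assoc (Es i) (Fi r), h0, zero_mul, mul_zero]
    rcases Nat.lt_or_ge j s with hjs | hjs
    · have h0 : Fi s * Es j = 0 := hFE0 j s hjs hs
      simp only [mul_assoc]
      rw [h0, mul_zero, mul_zero, mul_zero, mul_zero]
    · have hne1 : r ≠ s := by intro h; exact hcond ⟨hri, hjs, Or.inl h⟩
      have hne2 : r ≠ s + 1 := by intro h; exact hcond ⟨hri, hjs, Or.inr h⟩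
      have h0 : Fi r * A * Fi s = 0 := hblockA r hr s hs hne1 hne2
      simp only [mul_assoc]
      rw [← mul_assoc A (Fi s) (Es j), ← mul_assoc (Fi r) (A * Fi s) (Es j),
        ← mul_assoc (Fi r) A (Fi s), h0, zero_mul, mul_zero, mul_zero]
  -- step 1 : expand A between resolutions of identity
  have step1 : Fi i * Es i * A * Es j
      = ∑ r ∈ Finset.range (d + 1), ∑ s ∈ Finset.range (d + 1), g r s := by
    conv_lhs => rw [show A = (∑ r ∈ Finset.range (d + 1), Fi r) * A *
      (∑ s ∈ Finset.range (d + 1), Fi s) by rw [hFsum, one_mul, mul_one]]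
    simp only [hg, Finset.mul_sum, Finset.sum_mul, mul_assoc]
    rw [Finset.sum_comm]
  -- step 2 : inner sum
  have inner : ∀ s ∈ Finset.range (d + 1),
      ∑ r ∈ Finset.range (d + 1), g r s
        = (if i ≤ s ∧ s ≤ j then g s s else 0)
          + (if i ≤ s + 1 ∧ s + 1 ≤ d ∧ s ≤ j then g (s + 1) s else 0) := by
    intro s hs
    rw [Finset.mem_range] at hs
    have hsd : s ≤ d := by omega
    have term : ∀ r ∈ Finset.range (d + 1),
        g r s = (if r = s then (if i ≤ s ∧ s ≤ j then g s s else 0) else 0)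
          + (if r = s + 1 then
              (if i ≤ s + 1 ∧ s + 1 ≤ d ∧ s ≤ j then g (s + 1) s else 0) else 0) := by
      intro r hr
      rw [Finset.mem_range] at hr
      by_cases h1 : r = s
      · subst h1
        rw [if_pos rfl, if_neg (by omega : ¬ r = r + 1), add_zero]
        by_cases h2 : i ≤ r ∧ r ≤ j
        · rw [if_pos h2]
        · rw [if_neg h2, hg0 r hsd r hsd (by omega)]
      · by_cases h1' : r = s + 1
        · subst h1'
          rw [if_neg h1, if_pos rfl, zero_add]
          by_cases h2 : i ≤ s + 1 ∧ s + 1 ≤ d ∧ s ≤ j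
          · rw [if_pos h2]
          · rw [if_neg h2, hg0 (s + 1) (by omega) s hsd (by omega)]
        · rw [if_neg h1, if_neg h1', add_zero, hg0 r (by omega) s hsd (by omega)]
    rw [Finset.sum_congr rfl term, Finset.sum_add_distrib,
      Finset.sum_ite_eq' (Finset.range (d + 1)) s,
      Finset.sum_ite_eq' (Finset.range (d + 1)) (s + 1)]
    simp only [Finset.mem_range]
    rw [if_pos (by omega : s < d + 1)]
    by_cases h3 : s + 1 < d + 1
    · rw [if_pos h3]
    · rw [if_neg h3, if_neg (by omega : ¬(i ≤ s + 1 ∧ s + 1 ≤ d ∧ s ≤ j))]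
  -- step 3 : the sum splits into the diagonal and superdiagonal pieces
  have step3 : ∑ r ∈ Finset.range (d + 1), ∑ s ∈ Finset.range (d + 1), g r s
      = (∑ s ∈ Finset.Icc i j, g s s)
        + ∑ s ∈ (Finset.range (j + 1)).filter (fun s => i ≤ s + 1 ∧ s + 1 ≤ d),
            g (s + 1) s := by
    rw [Finset.sum_comm, Finset.sum_congr rfl inner, Finset.sum_add_distrib]
    congr 1
    · rw [← Finset.sum_filter]
      apply Finset.sum_congr _ (fun _ _ => rfl)
      ext s
      simp only [Finset.mem_filter, Finset.mem_range, Finset.mem_Icc]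
      omega
    · rw [← Finset.sum_filter]
      apply Finset.sum_congr _ (fun _ _ => rfl)
      ext s
      simp only [Finset.mem_filter, Finset.mem_range]
      omega
  -- per-term identities
  have diagterm : ∀ s ∈ Finset.Icc i j, g s s
      = (θ s * (∏ k ∈ Finset.Ioc i s, (θs i - θs k))⁻¹ *
          (∏ k ∈ Finset.Ico s j, (θs j - θs k))⁻¹) •
            (cL ^ (s - i) * cL ^ (j - s) * (Fi j * Es j)) := by
    intro s hsmem
    rw [Finset.mem_Icc] at hsmem
    obtain ⟨his, hsj⟩ := hsmem
    have hsd : s ≤ d := le_trans hsj hj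
    have h1 : g s s = Fi i * (Es i * (Fi s * (A * (Fi s * Es j)))) := by
      simp only [hg]; simp only [mul_assoc]
    rw [h1]
    have h2 : Fi s * (A * (Fi s * Es j)) = θ s • (Fi s * Es j) := by
      rw [show Fi s * (A * (Fi s * Es j)) = (Fi s * A * Fi s) * Es j from by
        simp only [mul_assoc], hFAF0 s hsd, smul_mul_assoc]
    rw [h2, show Fi s * Es j = Fi s * (Fi s * Es j) from by
      rw [← mul_assoc, hidem s hsd], hFE s j hsj hj]
    simp only [mul_smul_comm, smul_smul]
    rw [show Es i * (Fi s * (cL ^ (j - s) * (Fi j * Es j)))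
        = (Es i * Fi s) * (cL ^ (j - s) * (Fi j * Es j)) from (mul_assoc _ _ _).symm,
      hEF i s his hsd]
    simp only [smul_mul_assoc, mul_smul_comm, smul_smul, mul_assoc]
    rw [show Fi i * (Es i * (Fi i * (cL ^ (s - i) * (cL ^ (j - s) * (Fi j * Es j)))))
        = (Fi i * Es i * Fi i) * (cL ^ (s - i) * (cL ^ (j - s) * (Fi j * Es j))) from by
      simp only [mul_assoc], hFEF i hi]
    rw [show cL ^ (s - i) * (cL ^ (j - s) * (Fi j * Es j)) = cL ^ (j - i) * (Fi j * Es j) from by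
      rw [← mul_assoc, ← pow_add]; congr 2; omega]
    rw [hL2 i j (Es j) (le_trans his hsj) hj]
    rw [show cL ^ (j - i) * (Fi j * Es j) = cL ^ (s - i) * cL ^ (j - s) * (Fi j * Es j) from by
      rw [← pow_add]; congr 2; omega]
    congr 1
    ring
  have superterm : ∀ s ∈ (Finset.range (j + 1)).filter
      (fun s => i ≤ s + 1 ∧ s + 1 ≤ d), g (s + 1) s
      = ((∏ k ∈ Finset.Ioc i (s + 1), (θs i - θs k))⁻¹ *
          (∏ k ∈ Finset.Ico s j, (θs j - θs k))⁻¹) •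
            (cL ^ (s + 1 - i) * cR * cL ^ (j - s) * (Fi j * Es j)) := by
    intro s hsmem
    rw [Finset.mem_filter, Finset.mem_range] at hsmem
    obtain ⟨hsj', hs1, hs1d⟩ := hsmem
    have hsj : s ≤ j := by omega
    have hsd : s ≤ d := by omega
    have hslt : s < d := by omega
    have h1 : g (s + 1) s = Fi i * (Es i * (Fi (s + 1) * (A * (Fi s * Es j)))) := by
      simp only [hg]; simp only [mul_assoc]
    rw [h1]
    rw [show Fi (s + 1) * (A * (Fi s * Es j))
        = Fi (s + 1) * (Fi (s + 1) * (A * (Fi s * Es j))) from by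
      conv_rhs => rw [← mul_assoc, hidem (s + 1) hs1d]]
    rw [show Fi s * Es j = Fi s * (Fi s * Es j) from by
      conv_rhs => rw [← mul_assoc, hidem s hsd]]
    rw [show Fi (s + 1) * (A * (Fi s * (Fi s * Es j))) = cR * (Fi s * (Fi s * Es j)) from by
      conv_rhs => rw [← mul_assoc, ← hFAF1 s hslt]
      simp only [mul_assoc]]
    rw [hFE s j hsj hj]
    simp only [mul_smul_comm, smul_smul]
    rw [show Es i * (Fi (s + 1) * (cR * (Fi s * (cL ^ (j - s) * (Fi j * Es j)))))
        = (Es i * Fi (s + 1)) * (cR * (Fi s * (cL ^ (j - s) * (Fi j * Es j))))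
        from (mul_assoc _ _ _).symm,
      hEF i (s + 1) hs1 hs1d]
    simp only [smul_mul_assoc, mul_smul_comm, smul_smul, mul_assoc]
    rw [show Fi i * (Es i * (Fi i *
          (cL ^ (s + 1 - i) * (cR * (Fi s * (cL ^ (j - s) * (Fi j * Es j)))))))
        = (Fi i * Es i * Fi i) *
          (cL ^ (s + 1 - i) * (cR * (Fi s * (cL ^ (j - s) * (Fi j * Es j))))) from by
      simp only [mul_assoc], hFEF i hi]
    rw [hL3 s (cL ^ (j - s) * (Fi j * Es j)) hs1 hs1d]
    rw [hL2 s j (Es j) hsj hj]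
    congr 1
    ring
  rw [step1, step3, Finset.sum_congr rfl diagterm, Finset.sum_congr rfl superterm]
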